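/- For n ≥ 8, let G_0 be the tree of order n obtained from the star K_{1,n−2} by adding a new vertex adjacent to exactly one leaf of the star. Then the complement of G_0 is connected and rvd(complement of G_0) = n−1; hence the bound rvd(Ḡ) ≥ n−1 for trees G of order n ≥ 8 with connected complement is sharp. -/

import Mathlib

open SimpleGraph

/-- The graph obtained from `G` by removing (isolating) the vertices of `S`.
Since in our uses the endpoints of interest never lie in `S`, reachability
between them in this graph agrees with reachability in `G - S`. -/
def SimpleGraph.delVerts {V : Type*} (G : SimpleGraph V) (S : Set V) : SimpleGraph V where
  Adj u v := G.Adj u v ∧ u ∉ S ∧ v ∉ S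
  symm := ⟨fun u v h => ⟨h.1.symm, h.2.2, h.2.1⟩⟩
  loopless := ⟨fun v h => G.irrefl h.1⟩

/-- `c` is a rainbow vertex-disconnection coloring of `G`: every two distinct
vertices `x, y` admit an `x`-`y` rainbow vertex-cut. -/
def SimpleGraph.IsRVDColoring {V α : Type*} (G : SimpleGraph V) (c : V → α) : Prop :=
  ∀ x y : V, x ≠ y → ∃ S : Set V, x ∉ S ∧ y ∉ S ∧
    (¬ G.Adj x y → ¬ (G.delVerts S).Reachable x y ∧ Set.InjOn c S) ∧
    (G.Adj x y → ¬ ((G.deleteEdges {s(x, y)}).delVerts S).Reachable x y ∧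
      (Set.InjOn c (S ∪ {x}) ∨ Set.InjOn c (S ∪ {y})))

/-- The rainbow vertex-disconnection number of `G`: the minimum number of colors
in a rainbow vertex-disconnection coloring of `G`. -/
noncomputable def SimpleGraph.rvd {V : Type*} (G : SimpleGraph V) : ℕ :=
  sInf {k | ∃ c : V → Fin k, G.IsRVDColoring c}

/-- The tree of order `n` obtained from the star `K_{1,n-2}` (center `0`,
leaves `1, …, n-2`) by adding a new vertex `n-1` adjacent to exactly one leaf
(the leaf `1`). -/
def starPlusPendant (n : ℕ) : SimpleGraph (Fin n) :=
  SimpleGraph.fromRel fun u v =>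
    ((u : ℕ) = 0 ∧ 1 ≤ (v : ℕ) ∧ (v : ℕ) ≤ n - 2) ∨ ((u : ℕ) = n - 1 ∧ (v : ℕ) = 1)

section Aux

lemma delVerts_adj' {V : Type*} {G : SimpleGraph V} {S : Set V} {u v : V} :
    (G.delVerts S).Adj u v ↔ G.Adj u v ∧ u ∉ S ∧ v ∉ S := Iff.rfl

lemma not_reachable_of_isolated {V : Type*} {G : SimpleGraph V} {x y : V}
    (hxy : x ≠ y) (h : ∀ z, ¬ G.Adj x z) : ¬ G.Reachable x y := by
  intro hr
  obtain ⟨w⟩ := hr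
  cases w with
  | nil => exact hxy rfl
  | cons a _ => exact h _ a

lemma spp_compl_adj {n : ℕ} (u v : Fin n) :
    (starPlusPendant n)ᶜ.Adj u v ↔ (u : ℕ) ≠ (v : ℕ) ∧
      ¬((u : ℕ) = 0 ∧ 1 ≤ (v : ℕ) ∧ (v : ℕ) ≤ n - 2) ∧
      ¬((v : ℕ) = 0 ∧ 1 ≤ (u : ℕ) ∧ (u : ℕ) ≤ n - 2) ∧
      ¬((u : ℕ) = n - 1 ∧ (v : ℕ) = 1) ∧
      ¬((v : ℕ) = n - 1 ∧ (u : ℕ) = 1) := by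
  simp only [SimpleGraph.compl_adj, starPlusPendant, SimpleGraph.fromRel_adj, ne_eq, Fin.ext_iff]
  tauto

/-- The per-pair condition appearing in `IsRVDColoring`. -/
def cutOK {V α : Type*} (G : SimpleGraph V) (c : V → α) (x y : V) : Prop :=
  ∃ S : Set V, x ∉ S ∧ y ∉ S ∧
    (¬ G.Adj x y → ¬ (G.delVerts S).Reachable x y ∧ Set.InjOn c S) ∧
    (G.Adj x y → ¬ ((G.deleteEdges {s(x, y)}).delVerts S).Reachable x y ∧
      (Set.InjOn c (S ∪ {x}) ∨ Set.InjOn c (S ∪ {y})))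

lemma cutOK_symm {V α : Type*} {G : SimpleGraph V} {c : V → α} {x y : V}
    (h : cutOK G c x y) : cutOK G c y x := by
  obtain ⟨S, hx, hy, hna, ha⟩ := h
  refine ⟨S, hy, hx, ?_, ?_⟩
  · intro hadj
    obtain ⟨h1, h2⟩ := hna (fun h' => hadj h'.symm)
    exact ⟨fun r => h1 r.symm, h2⟩
  · intro hadj
    obtain ⟨h1, h2⟩ := ha hadj.symm
    have hs : (s(y, x) : Sym2 V) = s(x, y) := Sym2.eq_swap
    rw [hs]
    exact ⟨fun r => h1 r.symm, h2.symm⟩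

lemma cut_not_reachable {V : Type*} {G : SimpleGraph V} {S : Set V} {x y : V}
    (hxy : x ≠ y) (h : ∀ z, G.Adj x z → z ∉ S → z = y) :
    ¬ ((G.deleteEdges {s(x, y)}).delVerts S).Reachable x y := by
  apply not_reachable_of_isolated hxy
  intro z hz
  obtain ⟨he, -, hzS⟩ := delVerts_adj'.mp hz
  obtain ⟨hadj, hne⟩ := SimpleGraph.deleteEdges_adj.mp he
  have := h z hadj hzS
  subst this
  exact hne rfl

lemma cut_not_reachable_right {V : Type*} {G : SimpleGraph V} {S : Set V} {x y : V}
    (hxy : x ≠ y) (h : ∀ z, G.Adj y z → z ∉ S → z = x) :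
    ¬ ((G.deleteEdges {s(x, y)}).delVerts S).Reachable x y := by
  have h1 : ¬ ((G.deleteEdges {s(y, x)}).delVerts S).Reachable y x :=
    cut_not_reachable hxy.symm h
  rw [show (s(y, x) : Sym2 V) = s(x, y) from Sym2.eq_swap] at h1
  exact fun r => h1 r.symm

lemma cut_not_reachable' {V : Type*} {G : SimpleGraph V} {S : Set V} {x y : V}
    (hxy : x ≠ y) (h : ∀ z, G.Adj x z → z ∈ S) :
    ¬ (G.delVerts S).Reachable x y := by
  apply not_reachable_of_isolated hxy
  intro z hz
  obtain ⟨he, -, hzS⟩ := delVerts_adj'.mp hz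
  exact hzS (h z he)

/-- The optimal coloring: `0` and `1` get color `0`; `v ≥ 1` gets color `v - 1`. -/
def rvdColoring (n : ℕ) (hn : 8 ≤ n) : Fin n → Fin (n - 1) :=
  fun v => if (v : ℕ) = 0 then ⟨0, by omega⟩ else ⟨(v : ℕ) - 1, by have := v.isLt; omega⟩

lemma rvdColoring_val (n : ℕ) (hn : 8 ≤ n) (v : Fin n) :
    ((rvdColoring n hn v : Fin (n - 1)) : ℕ) = if (v : ℕ) = 0 then 0 else (v : ℕ) - 1 := by
  unfold rvdColoring
  by_cases h : (v : ℕ) = 0 <;> simp [h]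

lemma injOn_pos (n : ℕ) (hn : 8 ≤ n) :
    Set.InjOn (rvdColoring n hn) {v : Fin n | 1 ≤ (v : ℕ)} := by
  intro a ha b hb hab
  simp only [Set.mem_setOf_eq] at ha hb
  have h1 := rvdColoring_val n hn a
  have h2 := rvdColoring_val n hn b
  rw [hab, h2] at h1
  rw [if_neg (by omega), if_neg (by omega)] at h1
  exact Fin.ext (by omega)

lemma injOn_ne1 (n : ℕ) (hn : 8 ≤ n) :
    Set.InjOn (rvdColoring n hn) {v : Fin n | (v : ℕ) ≠ 1} := by
  intro a ha b hb hab
  simp only [Set.mem_setOf_eq] at ha hb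
  have h1 := rvdColoring_val n hn a
  have h2 := rvdColoring_val n hn b
  rw [hab, h2] at h1
  apply Fin.ext
  by_cases ha0 : (a : ℕ) = 0 <;> by_cases hb0 : (b : ℕ) = 0
  · omega
  · rw [if_pos ha0, if_neg hb0] at h1; omega
  · rw [if_neg ha0, if_pos hb0] at h1; omega
  · rw [if_neg ha0, if_neg hb0] at h1; omega

lemma rvd_key (n : ℕ) (hn : 8 ≤ n) :
    ∀ x y : Fin n, (x : ℕ) < (y : ℕ) →
      cutOK (starPlusPendant n)ᶜ (rvdColoring n hn) x y := by
  intro x y hlt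
  have hxy : x ≠ y := fun h => by simp [h] at hlt
  have hyn : (y : ℕ) < n := y.isLt
  have hxn : (x : ℕ) < n := x.isLt
  by_cases hx0 : (x : ℕ) = 0
  · by_cases hy : (y : ℕ) = n - 1
    · -- x = 0, y = n-1 : adjacent, S = ∅
      have hadj : (starPlusPendant n)ᶜ.Adj x y := by rw [spp_compl_adj]; omega
      refine ⟨∅, Set.notMem_empty x, Set.notMem_empty y, fun h => absurd hadj h,
        fun _ => ⟨?_, ?_⟩⟩
      · apply cut_not_reachable hxy
        intro z hz _
        rw [spp_compl_adj] at hz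
        exact Fin.ext (by omega)
      · left
        refine Set.InjOn.mono ?_ (injOn_ne1 n hn)
        intro v hv
        simp only [Set.empty_union, Set.mem_singleton_iff] at hv
        subst hv
        simp only [Set.mem_setOf_eq]
        omega
    · -- x = 0, 1 ≤ y ≤ n-2 : nonadjacent, S = {v | v = n-1}
      have hnadj : ¬ (starPlusPendant n)ᶜ.Adj x y := by rw [spp_compl_adj]; omega
      refine ⟨{v : Fin n | (v : ℕ) = n - 1}, ?_, ?_, fun _ => ⟨?_, ?_⟩,
        fun h => absurd h hnadj⟩
      · simp only [Set.mem_setOf_eq]; omega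
      · simp only [Set.mem_setOf_eq]; omega
      · apply cut_not_reachable' hxy
        intro z hz
        rw [spp_compl_adj] at hz
        simp only [Set.mem_setOf_eq]
        have := z.isLt
        omega
      · refine Set.InjOn.mono ?_ (injOn_pos n hn)
        intro v hv
        simp only [Set.mem_setOf_eq] at hv ⊢
        omega
  · by_cases hx1 : (x : ℕ) = 1
    · by_cases hy : (y : ℕ) = n - 1
      · -- x = 1, y = n-1 : nonadjacent, S = [2, n-2]
        have hnadj : ¬ (starPlusPendant n)ᶜ.Adj x y := by rw [spp_compl_adj]; omega
        refine ⟨{v : Fin n | 2 ≤ (v : ℕ) ∧ (v : ℕ) ≤ n - 2}, ?_, ?_, fun _ => ⟨?_, ?_⟩,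
          fun h => absurd h hnadj⟩
        · simp only [Set.mem_setOf_eq]; omega
        · simp only [Set.mem_setOf_eq]; omega
        · apply cut_not_reachable' hxy
          intro z hz
          rw [spp_compl_adj] at hz
          simp only [Set.mem_setOf_eq]
          have := z.isLt
          omega
        · refine Set.InjOn.mono ?_ (injOn_pos n hn)
          intro v hv
          simp only [Set.mem_setOf_eq] at hv ⊢
          omega
      · -- x = 1, 2 ≤ y ≤ n-2 : adjacent, S = [2,n-2] \ {y}
        have hadj : (starPlusPendant n)ᶜ.Adj x y := by rw [spp_compl_adj]; omega
        refine ⟨{v : Fin n | 2 ≤ (v : ℕ) ∧ (v : ℕ) ≤ n - 2 ∧ (v : ℕ) ≠ (y : ℕ)}, ?_, ?_,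
          fun h => absurd hadj h, fun _ => ⟨?_, ?_⟩⟩
        · simp only [Set.mem_setOf_eq]; omega
        · simp only [Set.mem_setOf_eq]; omega
        · apply cut_not_reachable hxy
          intro z hz hzS
          rw [spp_compl_adj] at hz
          simp only [Set.mem_setOf_eq] at hzS
          have := z.isLt
          exact Fin.ext (by omega)
        · left
          refine Set.InjOn.mono ?_ (injOn_pos n hn)
          intro v hv
          simp only [Set.mem_union, Set.mem_setOf_eq, Set.mem_singleton_iff] at hv
          simp only [Set.mem_setOf_eq]
          rcases hv with hv | hv
          · omega
          · subst hv; omega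
    · -- 2 ≤ x ≤ n-2 (since x < y ≤ n-1)
      have hx2 : 2 ≤ (x : ℕ) := by omega
      have hxn2 : (x : ℕ) ≤ n - 2 := by omega
      by_cases hy : (y : ℕ) = n - 1
      · -- 2 ≤ x ≤ n-2, y = n-1 : adjacent, S = {0} ∪ ([2,n-2] \ {x})
        have hadj : (starPlusPendant n)ᶜ.Adj x y := by rw [spp_compl_adj]; omega
        refine ⟨{v : Fin n | (v : ℕ) = 0 ∨ (2 ≤ (v : ℕ) ∧ (v : ℕ) ≤ n - 2 ∧ (v : ℕ) ≠ (x : ℕ))},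
          ?_, ?_, fun h => absurd hadj h, fun _ => ⟨?_, ?_⟩⟩
        · simp only [Set.mem_setOf_eq]; omega
        · simp only [Set.mem_setOf_eq]; omega
        · apply cut_not_reachable_right hxy
          intro z hz hzS
          rw [spp_compl_adj] at hz
          simp only [Set.mem_setOf_eq] at hzS
          have := z.isLt
          exact Fin.ext (by omega)
        · right
          refine Set.InjOn.mono ?_ (injOn_ne1 n hn)
          intro v hv
          simp only [Set.mem_union, Set.mem_setOf_eq, Set.mem_singleton_iff] at hv
          simp only [Set.mem_setOf_eq]
          rcases hv with hv | hv
          · omega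
          · subst hv; omega
      · -- 2 ≤ x < y ≤ n-2 : adjacent, S = {v | 1 ≤ v, v ≠ x, v ≠ y}
        have hadj : (starPlusPendant n)ᶜ.Adj x y := by rw [spp_compl_adj]; omega
        refine ⟨{v : Fin n | 1 ≤ (v : ℕ) ∧ (v : ℕ) ≠ (x : ℕ) ∧ (v : ℕ) ≠ (y : ℕ)}, ?_, ?_,
          fun h => absurd hadj h, fun _ => ⟨?_, ?_⟩⟩
        · simp only [Set.mem_setOf_eq]; omega
        · simp only [Set.mem_setOf_eq]; omega
        · apply cut_not_reachable hxy
          intro z hz hzS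
          rw [spp_compl_adj] at hz
          simp only [Set.mem_setOf_eq] at hzS
          have := z.isLt
          exact Fin.ext (by omega)
        · left
          refine Set.InjOn.mono ?_ (injOn_pos n hn)
          intro v hv
          simp only [Set.mem_union, Set.mem_setOf_eq, Set.mem_singleton_iff] at hv
          simp only [Set.mem_setOf_eq]
          rcases hv with hv | hv
          · omega
          · subst hv; omega

lemma isRVD (n : ℕ) (hn : 8 ≤ n) :
    (starPlusPendant n)ᶜ.IsRVDColoring (rvdColoring n hn) := by
  intro x y hxy
  rcases lt_trichotomy (x : ℕ) (y : ℕ) with h | h | h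
  · exact rvd_key n hn x y h
  · exact absurd (Fin.ext h) hxy
  · exact cutOK_symm (rvd_key n hn y x h)

lemma rvd_lower (n : ℕ) (hn : 8 ≤ n) (k : ℕ) (c : Fin n → Fin k)
    (h : (starPlusPendant n)ᶜ.IsRVDColoring c) : n - 1 ≤ k := by
  by_contra hk
  push_neg at hk
  have keyA : ∀ x y : Fin n, 2 ≤ (x : ℕ) → (x : ℕ) ≤ n - 2 → 2 ≤ (y : ℕ) → (y : ℕ) ≤ n - 2 →
      x ≠ y →
      Set.InjOn c ({v : Fin n | 1 ≤ (v : ℕ)} \ {x}) ∨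
      Set.InjOn c ({v : Fin n | 1 ≤ (v : ℕ)} \ {y}) := by
    intro x y hx2 hxn2 hy2 hyn2 hxy
    obtain ⟨S, hxS, hyS, -, hA⟩ := h x y hxy
    have hvxy : (x : ℕ) ≠ (y : ℕ) := fun hv => hxy (Fin.ext hv)
    have hadj : (starPlusPendant n)ᶜ.Adj x y := by rw [spp_compl_adj]; omega
    obtain ⟨hnr, hinj⟩ := hA hadj
    have hsub : ∀ z : Fin n, 1 ≤ (z : ℕ) → z ≠ x → z ≠ y → z ∈ S := by
      intro z h1 hzx hzy
      by_contra hzS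
      apply hnr
      have hvx : (z : ℕ) ≠ (x : ℕ) := fun hv => hzx (Fin.ext hv)
      have hvy : (z : ℕ) ≠ (y : ℕ) := fun hv => hzy (Fin.ext hv)
      have hzn := z.isLt
      have e1 : ((starPlusPendant n)ᶜ.deleteEdges {s(x, y)}).Adj x z := by
        rw [SimpleGraph.deleteEdges_adj]
        constructor
        · rw [spp_compl_adj]; omega
        · intro hm
          exact hzy (Sym2.congr_right.mp (Set.mem_singleton_iff.mp hm))
      have e2 : ((starPlusPendant n)ᶜ.deleteEdges {s(x, y)}).Adj z y := by
        rw [SimpleGraph.deleteEdges_adj]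
        constructor
        · rw [spp_compl_adj]; omega
        · intro hm
          exact hzx (Sym2.congr_left.mp (Set.mem_singleton_iff.mp hm))
      exact ⟨SimpleGraph.Walk.cons (delVerts_adj'.mpr ⟨e1, hxS, hzS⟩)
        (SimpleGraph.Walk.cons (delVerts_adj'.mpr ⟨e2, hzS, hyS⟩) SimpleGraph.Walk.nil)⟩
    rcases hinj with hi | hi
    · refine Or.inr (Set.InjOn.mono ?_ hi)
      rintro z ⟨hz1, hz2⟩
      simp only [Set.mem_setOf_eq] at hz1
      simp only [Set.mem_singleton_iff] at hz2
      by_cases hzx : z = x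
      · exact Set.mem_union_right S (Set.mem_singleton_iff.mpr hzx)
      · exact Set.mem_union_left _ (hsub z hz1 hzx hz2)
    · refine Or.inl (Set.InjOn.mono ?_ hi)
      rintro z ⟨hz1, hz2⟩
      simp only [Set.mem_setOf_eq] at hz1
      simp only [Set.mem_singleton_iff] at hz2
      by_cases hzy : z = y
      · exact Set.mem_union_right S (Set.mem_singleton_iff.mpr hzy)
      · exact Set.mem_union_left _ (hsub z hz1 hz2 hzy)
  haveI : NeZero n := ⟨by omega⟩
  -- non-injectivity on the n-1 positive vertices
  have hPcard : (Finset.univ.filter (fun v : Fin n => 1 ≤ (v : ℕ))).card = n - 1 := by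
    have hPe : (Finset.univ.filter (fun v : Fin n => 1 ≤ (v : ℕ)))
        = ({0} : Finset (Fin n))ᶜ := by
      ext v
      simp only [Finset.mem_filter, Finset.mem_univ, true_and, Finset.mem_compl,
        Finset.mem_singleton, Nat.one_le_iff_ne_zero, ne_eq, Fin.val_eq_zero_iff]
    rw [hPe, Finset.card_compl]
    simp
  obtain ⟨a, ha, b, hb, hab, hcab⟩ :=
    Finset.exists_ne_map_eq_of_card_lt_of_maps_to
      (t := (Finset.univ : Finset (Fin k)))
      (by rw [hPcard, Finset.card_univ, Fintype.card_fin]; omega)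
      (fun a _ => Finset.mem_univ (c a))
  have ha1 : 1 ≤ (a : ℕ) := (Finset.mem_filter.mp ha).2
  have hb1 : 1 ≤ (b : ℕ) := (Finset.mem_filter.mp hb).2
  -- pick x, y in {2,3,4,5} avoiding a, b
  set v2 : Fin n := ⟨2, by omega⟩ with hv2
  set v3 : Fin n := ⟨3, by omega⟩ with hv3
  set v4 : Fin n := ⟨4, by omega⟩ with hv4
  set v5 : Fin n := ⟨5, by omega⟩ with hv5
  have hq : 1 < (({v2, v3, v4, v5} : Finset (Fin n)) \ {a, b}).card := by
    have h4 : ({v2, v3, v4, v5} : Finset (Fin n)).card = 4 := by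
      rw [Finset.card_insert_of_notMem (by simp [hv2, hv3, hv4, hv5, Fin.ext_iff]),
          Finset.card_insert_of_notMem (by simp [hv3, hv4, hv5, Fin.ext_iff]),
          Finset.card_insert_of_notMem (by simp [hv4, hv5, Fin.ext_iff]),
          Finset.card_singleton]
    have h2 : ({a, b} : Finset (Fin n)).card ≤ 2 :=
      le_trans (Finset.card_insert_le _ _) (by simp)
    have h3 := Finset.le_card_sdiff ({a, b} : Finset (Fin n)) ({v2, v3, v4, v5} : Finset (Fin n))
    omega
  obtain ⟨x, hx, y, hy, hxyne⟩ := Finset.one_lt_card.mp hq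
  obtain ⟨hxm, hxab⟩ := Finset.mem_sdiff.mp hx
  obtain ⟨hym, hyab⟩ := Finset.mem_sdiff.mp hy
  simp only [Finset.mem_insert, Finset.mem_singleton, not_or] at hxab hyab
  have hxvals : (x : ℕ) = 2 ∨ (x : ℕ) = 3 ∨ (x : ℕ) = 4 ∨ (x : ℕ) = 5 := by
    simpa [hv2, hv3, hv4, hv5, Fin.ext_iff] using hxm
  have hyvals : (y : ℕ) = 2 ∨ (y : ℕ) = 3 ∨ (y : ℕ) = 4 ∨ (y : ℕ) = 5 := by
    simpa [hv2, hv3, hv4, hv5, Fin.ext_iff] using hym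
  have haM : ∀ w : Fin n, w ≠ a → a ∈ ({v : Fin n | 1 ≤ (v : ℕ)} \ {w} : Set (Fin n)) :=
    fun w hw => ⟨ha1, fun hm => hw (Set.mem_singleton_iff.mp hm).symm⟩
  have hbM : ∀ w : Fin n, w ≠ b → b ∈ ({v : Fin n | 1 ≤ (v : ℕ)} \ {w} : Set (Fin n)) :=
    fun w hw => ⟨hb1, fun hm => hw (Set.mem_singleton_iff.mp hm).symm⟩
  rcases keyA x y (by omega) (by omega) (by omega) (by omega) hxyne with hi | hi
  · exact hab (hi (haM x hxab.1) (hbM x hxab.2) hcab)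
  · exact hab (hi (haM y hyab.1) (hbM y hyab.2) hcab)

end Aux

/-- For `n ≥ 8`, the complement of the tree `G₀` obtained from `K_{1,n-2}` by
adding a new vertex adjacent to one leaf is connected and has
`rvd(Ḡ₀) = n - 1`; hence the lower bound `rvd(Ḡ) ≥ n - 1` for trees of order
`n ≥ 8` is sharp. -/
theorem rvd_compl_starPlusPendant (n : ℕ) (hn : 8 ≤ n) :
    (starPlusPendant n)ᶜ.Connected ∧ (starPlusPendant n)ᶜ.rvd = n - 1 := by
  haveI : NeZero n := ⟨by omega⟩
  constructor
  · rw [SimpleGraph.connected_iff]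
    refine ⟨?_, ⟨⟨0, by omega⟩⟩⟩
    set vtwo : Fin n := ⟨2, by omega⟩ with hvtwo
    set vlast : Fin n := ⟨n - 1, by omega⟩ with hvlast
    have e2 : (vtwo : ℕ) = 2 := rfl
    have el : (vlast : ℕ) = n - 1 := rfl
    have key : ∀ w : Fin n, (starPlusPendant n)ᶜ.Reachable w vtwo := by
      intro w
      have hwn := w.isLt
      by_cases hw0 : (w : ℕ) = 0
      · have h1 : (starPlusPendant n)ᶜ.Adj w vlast := by
          rw [spp_compl_adj]; omega
        have h2 : (starPlusPendant n)ᶜ.Adj vlast vtwo := by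
          rw [spp_compl_adj]; omega
        exact h1.reachable.trans h2.reachable
      · by_cases hw2 : (w : ℕ) = 2
        · have hw : w = vtwo := Fin.ext (by omega)
          rw [hw]
        · have h1 : (starPlusPendant n)ᶜ.Adj w vtwo := by
            rw [spp_compl_adj]; omega
          exact h1.reachable
    intro u v
    exact (key u).trans (key v).symm
  · unfold SimpleGraph.rvd
    have hmem : n - 1 ∈ {k | ∃ c : Fin n → Fin k, (starPlusPendant n)ᶜ.IsRVDColoring c} :=
      ⟨rvdColoring n hn, isRVD n hn⟩
    apply le_antisymm
    · exact Nat.sInf_le hmem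
    · apply le_csInf ⟨n - 1, hmem⟩
      rintro k ⟨c, hc⟩
      exact rvd_lower n hn k c hc
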